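/- Chi-squared tail bound via Laurent–Massart (Lemma A4(b), first assertion): Let d be a positive integer, let Z be a random variable distributed as chi-squared with d degrees of freedom, and let t ≥ d. Then P(Z ≥ t) ≤ exp(−(√(2t − d) − √d)²/4). -/

import Mathlib

open MeasureTheory Matrix

/-- Frobenius norm of a real matrix. -/
noncomputable def frobNorm {m n : Type*} [Fintype m] [Fintype n] (A : Matrix m n ℝ) : ℝ :=
  Real.sqrt (∑ i, ∑ j, (A i j) ^ 2)

/-- ℓ2 operator norm (largest singular value) of a real matrix. -/
noncomputable def opNorm {m n : Type*} [Fintype m] [Fintype n] [DecidableEq n]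
    (A : Matrix m n ℝ) : ℝ :=
  ‖LinearMap.toContinuousLinearMap (Matrix.toEuclideanLin A)‖

/-- Entrywise maximum absolute value of a real matrix. -/
noncomputable def maxNorm {m n : Type*} [Fintype m] [Fintype n] (A : Matrix m n ℝ) : ℝ :=
  ⨆ i, ⨆ j, |A i j|

/-- Smallest eigenvalue of a real symmetric matrix, via the Rayleigh quotient
(infimum of the quadratic form over the unit sphere). -/
noncomputable def lambdaMin {n : Type*} [Fintype n] (A : Matrix n n ℝ) : ℝ :=
  ⨅ x : {x : n → ℝ // ∑ i, x i ^ 2 = 1}, ∑ i, ∑ j, x.1 i * A i j * x.1 j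

/-- Largest eigenvalue of a real symmetric matrix, via the Rayleigh quotient
(supremum of the quadratic form over the unit sphere). -/
noncomputable def lambdaMax {n : Type*} [Fintype n] (A : Matrix n n ℝ) : ℝ :=
  ⨆ x : {x : n → ℝ // ∑ i, x i ^ 2 = 1}, ∑ i, ∑ j, x.1 i * A i j * x.1 j

/-- Submatrix of `U` assembling the columns indexed by the finite set `ξ`. -/
def colSub {n p : ℕ} (U : Matrix (Fin n) (Fin p) ℝ) (ξ : Finset (Fin p)) :
    Matrix (Fin n) {j : Fin p // j ∈ ξ} ℝ :=
  Matrix.of fun i j => U i j.1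

section LaurentMassartAux
open Real Set

lemma aux_integrableOn {a c : ℝ} (ha : 0 < a) (hc : 0 < c) :
    IntegrableOn (fun x : ℝ => x ^ (a - 1) * Real.exp (-(c * x))) (Ioi 0) := by
  have h1 : IntegrableOn (fun x : ℝ => Real.exp (-x) * x ^ (a - 1)) (Ioi 0) :=
    Real.GammaIntegral_convergent ha
  have h2 : IntegrableOn (fun x : ℝ => Real.exp (-(c * x)) * (c * x) ^ (a - 1)) (Ioi 0) := by
    have := (integrableOn_Ioi_comp_mul_left_iff
      (fun x : ℝ => Real.exp (-x) * x ^ (a - 1)) 0 hc).mpr (by simpa using h1)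
    simpa using this
  have h3 := h2.const_mul ((c : ℝ) ^ (a - 1))⁻¹
  apply IntegrableOn.congr_fun h3 ?_ measurableSet_Ioi
  intro x hx
  simp only []
  rw [Real.mul_rpow hc.le (le_of_lt hx)]
  field_simp [(Real.rpow_pos_of_pos hc (a-1)).ne']

lemma aux_mgf {a lam t : ℝ} (ha : 0 < a) (hc : 0 < 1/2 - lam) :
    Integrable (fun x => Real.exp (lam * (x - t)) * ProbabilityTheory.gammaPDFReal a (1/2) x) ∧
    ∫ x, Real.exp (lam * (x - t)) * ProbabilityTheory.gammaPDFReal a (1/2) x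
      = Real.exp (-(lam * t)) * (1/(2*(1/2 - lam))) ^ a := by
  set c : ℝ := 1/2 - lam with hcdef
  set K : ℝ := Real.exp (-(lam * t)) * ((1/2 : ℝ) ^ a / Real.Gamma a) with hK
  set g : ℝ → ℝ := fun x => Real.exp (lam * (x - t)) * ProbabilityTheory.gammaPDFReal a (1/2) x
    with hg
  have hGamma : 0 < Real.Gamma a := Real.Gamma_pos_of_pos ha
  have hkey : ∀ x ∈ Ioi (0:ℝ), g x = K * (x ^ (a - 1) * Real.exp (-(c * x))) := by
    intro x hx
    have hx0 : (0:ℝ) ≤ x := (le_of_lt hx)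
    simp only [hg, ProbabilityTheory.gammaPDFReal, if_pos hx0, hK]
    rw [show lam * (x - t) = -(lam*t) + lam*x by ring, Real.exp_add]
    rw [show -(c*x) = lam*x + -(1/2*x) by rw [hcdef]; ring, Real.exp_add]
    rw [Real.exp_neg (1/2*x)]
    ring
  have hnull : g =ᵐ[volume] (Ioi (0:ℝ)).indicator
      (fun x => K * (x ^ (a - 1) * Real.exp (-(c * x)))) := by
    have : {x : ℝ | g x ≠ (Ioi (0:ℝ)).indicator
        (fun x => K * (x ^ (a - 1) * Real.exp (-(c * x)))) x} ⊆ {0} := by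
      intro x hx
      simp only [mem_setOf_eq] at hx
      by_contra hx0
      rcases lt_trichotomy x 0 with h|h|h
      · apply hx
        rw [indicator_of_notMem (by simpa using not_lt.mpr h.le)]
        simp [hg, ProbabilityTheory.gammaPDF_of_neg h, ProbabilityTheory.gammaPDFReal,
          if_neg (not_le.mpr h)]
      · exact hx0 (by simp [h])
      · exact hx (by rw [Set.indicator_of_mem (mem_Ioi.mpr h), hkey x (mem_Ioi.mpr h)])
    exact measure_mono_null this (measure_singleton 0)
  have hint : Integrable ((Ioi (0:ℝ)).indicator
      (fun x => K * (x ^ (a - 1) * Real.exp (-(c * x))))) := by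
    rw [integrable_indicator_iff measurableSet_Ioi]
    exact ((aux_integrableOn ha hc).const_mul K)
  have hgint : Integrable g := hint.congr hnull.symm
  refine ⟨hgint, ?_⟩
  rw [integral_congr_ae hnull, integral_indicator measurableSet_Ioi]
  rw [integral_const_mul, Real.integral_rpow_mul_exp_neg_mul_Ioi ha hc]
  have h2 : ((1/2:ℝ))^a * ((1/c)^a) = (1/(2*c))^a := by
    rw [← Real.mul_rpow (by norm_num) (by positivity)]
    norm_num [mul_comm]
  rw [hK, ← h2]
  field_simp

lemma aux_real_ineq {d t : ℝ} (hd : 1 ≤ d) (ht : d ≤ t) :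
    Real.exp (-((t - d)/(2*t) * t)) * (1/(2*(1/2 - (t-d)/(2*t)))) ^ ((d:ℝ)/2)
      ≤ Real.exp (-((Real.sqrt (2*t - d) - Real.sqrt d)^2 / 4)) := by
  have hd0 : (0:ℝ) < d := lt_of_lt_of_le one_pos hd
  have ht0 : (0:ℝ) < t := lt_of_lt_of_le hd0 ht
  have h2td : (0:ℝ) ≤ 2*t - d := by linarith
  have harg : (1:ℝ) ≤ (2*t - d)/d := (one_le_div hd0).mpr (by linarith)
  set v : ℝ := Real.sqrt ((2*t - d)/d) with hv
  have hv1 : (1:ℝ) ≤ v := by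
    rw [hv, show (1:ℝ) = Real.sqrt 1 by simp]
    exact Real.sqrt_le_sqrt harg
  have hv2 : v^2 = (2*t - d)/d := Real.sq_sqrt (by linarith)
  have hbase : 1/(2*(1/2 - (t-d)/(2*t))) = t/d := by
    field_simp
    ring_nf
    exact mul_inv_cancel₀ hd0.ne'
  have hexp1 : -((t - d)/(2*t) * t) = -(t-d)/2 := by field_simp
  rw [hbase, hexp1]
  have h1 : t/d ≤ Real.exp (v - 1) := by
    have hq := Real.quadratic_le_exp_of_nonneg (by linarith : (0:ℝ) ≤ v - 1)
    have : t/d = 1 + (v-1) + (v-1)^2/2 := by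
      have : (v-1)^2 = v^2 - 2*v + 1 := by ring
      rw [show 1 + (v-1) + (v-1)^2/2 = (v^2+1)/2 by ring, hv2]
      field_simp
      ring
    linarith
  have h2 : (t/d) ^ ((d:ℝ)/2) ≤ Real.exp ((v-1) * (d/2)) := by
    calc (t/d) ^ ((d:ℝ)/2) ≤ (Real.exp (v-1)) ^ ((d:ℝ)/2) :=
          Real.rpow_le_rpow (by positivity) h1 (by positivity)
      _ = Real.exp ((v-1) * (d/2)) := (Real.exp_mul _ _).symm
  have hvd : v * d = Real.sqrt (2*t - d) * Real.sqrt d := by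
    rw [hv, Real.sqrt_div h2td d]
    rw [div_mul_eq_mul_div, mul_div_assoc, Real.div_sqrt]
  have hfinal : -(t-d)/2 + (v-1) * (d/2)
      = -((Real.sqrt (2*t - d) - Real.sqrt d)^2 / 4) := by
    have hA : Real.sqrt (2*t-d) ^ 2 = 2*t - d := Real.sq_sqrt h2td
    have hB : Real.sqrt d ^ 2 = d := Real.sq_sqrt hd0.le
    have : (Real.sqrt (2*t - d) - Real.sqrt d)^2
        = (2*t - d) + d - 2 * (v * d) := by rw [hvd]; nlinarith [hA, hB]
    rw [this]; ring
  calc Real.exp (-(t-d)/2) * (t/d) ^ ((d:ℝ)/2)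
      ≤ Real.exp (-(t-d)/2) * Real.exp ((v-1) * (d/2)) := by
        exact mul_le_mul_of_nonneg_left h2 (Real.exp_pos _).le
    _ = Real.exp (-(t-d)/2 + (v-1) * (d/2)) := (Real.exp_add _ _).symm
    _ = _ := by rw [hfinal]

end LaurentMassartAux

/-- chi-squared tail bound via Laurent–Massart, Lemma A4(b).
Here the chi-squared distribution with `d` degrees of freedom is the Gamma distribution
with shape `d/2` and rate `1/2`.  If `t ≥ d` then
`P(Z ≥ t) ≤ exp(-(√(2t - d) - √d)²/4)`. -/
theorem chi_squared_laurent_massart_tail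
    {Ω : Type*} [MeasureSpace Ω] [IsProbabilityMeasure (volume : Measure Ω)]
    (d : ℕ) (hd : 0 < d)
    (Z : Ω → ℝ)
    (hZ : Measure.map Z volume = ProbabilityTheory.gammaMeasure ((d : ℝ) / 2) (1 / 2))
    (t : ℝ) (ht : (d : ℝ) ≤ t) :
    volume {ω | t ≤ Z ω} ≤
      ENNReal.ofReal (Real.exp (-((Real.sqrt (2 * t - d) - Real.sqrt d) ^ 2 / 4))) := by
  have hd1 : (1:ℝ) ≤ (d:ℝ) := by exact_mod_cast hd
  have hd0 : (0:ℝ) < (d:ℝ) := lt_of_lt_of_le one_pos hd1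
  have ht0 : (0:ℝ) < t := lt_of_lt_of_le hd0 ht
  set a : ℝ := (d:ℝ)/2 with ha
  have hapos : 0 < a := div_pos hd0 two_pos
  set lam : ℝ := (t - d)/(2*t) with hlam
  have hlam0 : 0 ≤ lam := div_nonneg (by linarith) (by linarith)
  have hc : 0 < 1/2 - lam := by
    rw [hlam, show (1:ℝ)/2 - (t-d)/(2*t) = d/(2*t) by field_simp; ring]
    positivity
  have hprob : IsProbabilityMeasure (ProbabilityTheory.gammaMeasure a (1/2)) :=
    ProbabilityTheory.isProbabilityMeasure_gammaMeasure hapos (by norm_num)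
  have hZmeas : AEMeasurable Z volume := by
    by_contra h
    rw [Measure.map_of_not_aemeasurable h] at hZ
    have h1 := hprob.measure_univ
    rw [← hZ] at h1
    simp at h1
  have hset : volume {ω | t ≤ Z ω} = ProbabilityTheory.gammaMeasure a (1/2) (Set.Ici t) := by
    rw [← hZ, Measure.map_apply_of_aemeasurable hZmeas measurableSet_Ici]
    rfl
  obtain ⟨hint, hval⟩ := aux_mgf (a := a) (lam := lam) (t := t) hapos hc
  set g : ℝ → ℝ :=
    fun x => Real.exp (lam * (x - t)) * ProbabilityTheory.gammaPDFReal a (1/2) x with hg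
  have hgnn : 0 ≤ᵐ[volume] g := ae_of_all _ fun x =>
    mul_nonneg (Real.exp_pos _).le
      (ProbabilityTheory.gammaPDFReal_nonneg hapos (by norm_num) x)
  have hgmeas : Measurable fun x => ENNReal.ofReal (g x) := by
    apply Measurable.ennreal_ofReal
    exact (((measurable_id.sub_const t).const_mul lam).exp).mul
      (ProbabilityTheory.measurable_gammaPDFReal a (1/2))
  calc volume {ω | t ≤ Z ω}
      = ProbabilityTheory.gammaMeasure a (1/2) (Set.Ici t) := hset
    _ = ∫⁻ x in Set.Ici t, ProbabilityTheory.gammaPDF a (1/2) x := by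
        rw [ProbabilityTheory.gammaMeasure, withDensity_apply _ measurableSet_Ici]
    _ ≤ ∫⁻ x in Set.Ici t, ENNReal.ofReal (g x) := by
        refine setLIntegral_mono hgmeas fun x hx => ?_
        rw [ProbabilityTheory.gammaPDF]
        apply ENNReal.ofReal_le_ofReal
        have h1e : 1 ≤ Real.exp (lam * (x - t)) :=
          Real.one_le_exp (mul_nonneg hlam0 (by simpa using sub_nonneg.mpr (Set.mem_Ici.mp hx)))
        exact le_mul_of_one_le_left
          (ProbabilityTheory.gammaPDFReal_nonneg hapos (by norm_num) x) h1e
    _ ≤ ∫⁻ x, ENNReal.ofReal (g x) := setLIntegral_le_lintegral _ _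
    _ = ENNReal.ofReal (∫ x, g x) :=
        (MeasureTheory.ofReal_integral_eq_lintegral_ofReal hint hgnn).symm
    _ ≤ ENNReal.ofReal (Real.exp (-((Real.sqrt (2 * t - d) - Real.sqrt d) ^ 2 / 4))) := by
        apply ENNReal.ofReal_le_ofReal
        rw [hval, hlam, ha]
        exact aux_real_ineq hd1 ht
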